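/- arXiv:1612.00382 — 7 statements merged into one kernel-verified Lean document; each statement's English description precedes it below -/
import Mathlib

section
/- Let K = ℚ(√D) with D squarefree, ω ∈ O_K with tr(ω) ≠ 0, and L an odd squarefree positive integer. Define Φ_L(ω) = ∏_{ℓ | L} tr(ω^{L/ℓ})^{μ(ℓ)} and Ψ_L(ω) = ∏_{ℓ | L, ℓ > 1} tr(ω^{L/ℓ})^{−μ(ℓ)}. Then Φ_L(ω) and Ψ_L(ω) are integers and tr(ω^L) = Φ_L(ω)·Ψ_L(ω). -/
open Finset Polynomial

private lemma prod_divisors_two_mul' {M : Type*} [CommMonoid M] (f : ℕ → M) {m : ℕ}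
    (hm : Odd m) (h0 : m ≠ 0) :
    ∏ d ∈ (2 * m).divisors, f d
      = (∏ d ∈ m.divisors, f d) * ∏ d ∈ m.divisors, f (2 * d) := by
  have hset : (2 * m).divisors = m.divisors ∪ m.divisors.image (2 * ·) := by
    ext e
    simp only [Nat.mem_divisors, Finset.mem_union, Finset.mem_image]
    constructor
    · rintro ⟨he, -⟩
      rcases Nat.even_or_odd e with he2 | he2
      · obtain ⟨d, rfl⟩ := he2
        right
        refine ⟨d, ⟨?_, h0⟩, by ring⟩
        have : 2 * d ∣ 2 * m := by simpa [two_mul] using he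
        exact (mul_dvd_mul_iff_left (by norm_num : (2:ℕ) ≠ 0)).mp this
      · left
        refine ⟨?_, h0⟩
        exact (Nat.Coprime.dvd_of_dvd_mul_left (he2.coprime_two_right) he)
    · rintro (⟨he, -⟩ | ⟨d, ⟨hd, -⟩, rfl⟩)
      · exact ⟨he.mul_left 2, by positivity⟩
      · exact ⟨mul_dvd_mul_left 2 hd, by positivity⟩
  have hdisj : Disjoint m.divisors (m.divisors.image (2 * ·)) := by
    rw [Finset.disjoint_right]
    rintro e he hem
    obtain ⟨d, -, rfl⟩ := Finset.mem_image.mp he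
    have h2 : 2 * d ∣ m := (Nat.mem_divisors.mp hem).1
    have : ¬ (2 ∣ m) := by
      rw [Nat.odd_iff] at hm; omega
    exact this (dvd_trans (Dvd.intro d rfl) h2)
  rw [hset, Finset.prod_union hdisj, Finset.prod_image]
  intro a _ b _ h
  simp only at h
  omega

private lemma pow_sub_pow_eq_prod' (x y : ℂ) (hy : y ≠ 0) {k : ℕ} (hk : k ≠ 0) :
    x ^ k - y ^ k = ∏ d ∈ k.divisors, ∏ ζ ∈ primitiveRoots d ℂ, (x - ζ * y) := by
  have h1 : ∀ d ∈ k.divisors, ∏ ζ ∈ primitiveRoots d ℂ, (x - ζ * y)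
      = y ^ d.totient * Polynomial.eval (x / y) (Polynomial.cyclotomic d ℂ) := by
    intro d hd
    have hd0 : d ≠ 0 := (Nat.pos_of_mem_divisors hd).ne'
    rw [Polynomial.cyclotomic_eq_prod_X_sub_primitiveRoots (Complex.isPrimitiveRoot_exp d hd0),
      Polynomial.eval_prod, ← Complex.card_primitiveRoots d, ← Finset.prod_const,
      ← Finset.prod_mul_distrib]
    refine Finset.prod_congr rfl fun ζ hζ => ?_
    simp only [Polynomial.eval_sub, Polynomial.eval_X, Polynomial.eval_C]
    field_simp
  rw [Finset.prod_congr rfl h1, Finset.prod_mul_distrib,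
    Finset.prod_pow_eq_pow_sum, Nat.sum_totient, ← Polynomial.eval_prod,
    Polynomial.prod_cyclotomic_eq_X_pow_sub_one (Nat.pos_of_ne_zero hk),
    Polynomial.eval_sub, Polynomial.eval_pow, Polynomial.eval_X, Polynomial.eval_one]
  field_simp
  rw [div_pow, mul_sub, mul_div_assoc', mul_div_cancel_left₀ _ (pow_ne_zero k hy), mul_one]

private lemma phi_mul_psi' {F : Type*} [Field F] (S : ℕ → F) {L : ℕ} (h0 : 0 < L)
    (hnz : ∀ d ∈ L.divisors, S d ≠ 0) :
    (∏ i ∈ L.divisors, S (L / i) ^ (ArithmeticFunction.moebius i)) *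
      (∏ i ∈ L.divisors.filter (fun ℓ => 1 < ℓ),
        S (L / i) ^ (-(ArithmeticFunction.moebius i))) = S L := by
  have hset : L.divisors = insert 1 (L.divisors.filter (fun ℓ => 1 < ℓ)) := by
    ext d
    simp only [Nat.mem_divisors, Finset.mem_insert, Finset.mem_filter]
    constructor
    · rintro ⟨hd, -⟩
      have hd0 : d ≠ 0 := by rintro rfl; simp at hd; omega
      rcases Nat.lt_or_ge d 2 with h | h
      · left; omega
      · right; exact ⟨⟨hd, h0.ne'⟩, by omega⟩
    · rintro (rfl | ⟨⟨hd, -⟩, -⟩)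
      · exact ⟨one_dvd L, h0.ne'⟩
      · exact ⟨hd, h0.ne'⟩
  have h1 : (1 : ℕ) ∉ L.divisors.filter (fun ℓ => 1 < ℓ) := by simp
  nth_rewrite 1 [hset]
  rw [Finset.prod_insert h1, ArithmeticFunction.moebius_apply_one, zpow_one,
    Nat.div_one, mul_assoc, ← Finset.prod_mul_distrib]
  have : ∀ i ∈ L.divisors.filter (fun ℓ => 1 < ℓ),
      S (L / i) ^ (ArithmeticFunction.moebius i) *
        S (L / i) ^ (-(ArithmeticFunction.moebius i)) = 1 := by
    intro i hi
    obtain ⟨hi', -⟩ := Finset.mem_filter.mp hi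
    have hdvd : L / i ∈ L.divisors :=
      Nat.mem_divisors.mpr ⟨Nat.div_dvd_of_dvd (Nat.mem_divisors.mp hi').1, h0.ne'⟩
    rw [← zpow_add₀ (hnz _ hdvd)]
    simp
  rw [Finset.prod_congr rfl this, Finset.prod_const_one, mul_one]



/-- Let `ω = a + b√D ∈ O_K` with `tr ω ≠ 0` and `L` odd squarefree positive. With
`Φ_L(ω) = ∏_{ℓ ∣ L} tr(ω^{L/ℓ})^{μ(ℓ)}` and `Ψ_L(ω) = ∏_{ℓ ∣ L, ℓ > 1} tr(ω^{L/ℓ})^{-μ(ℓ)}`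
(assuming all the traces involved are nonzero), both `Φ_L(ω)` and `Ψ_L(ω)` are integers and
`tr(ω^L) = Φ_L(ω)·Ψ_L(ω)`. -/
theorem trace_pow_factorization
    (D : ℕ) (hD : Squarefree D) (hD1 : 1 < D) (a b : ℚ)
    (ω ωb : ℝ) (hω : ω = a + b * Real.sqrt D) (hωb : ωb = a - b * Real.sqrt D)
    (hint : ∃ t n : ℤ, (t : ℝ) = ω + ωb ∧ (n : ℝ) = ω * ωb)
    (htr : ω + ωb ≠ 0)
    (L : ℕ) (hodd : Odd L) (hsf : Squarefree L) (hpos : 0 < L)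
    (hnz : ∀ d ∈ L.divisors, ω ^ d + ωb ^ d ≠ 0) :
    ∃ Φ Ψ : ℤ,
      (Φ : ℝ) = ∏ ℓ ∈ L.divisors, (ω ^ (L / ℓ) + ωb ^ (L / ℓ)) ^ (ArithmeticFunction.moebius ℓ) ∧
      (Ψ : ℝ) = ∏ ℓ ∈ L.divisors.filter (fun ℓ => 1 < ℓ),
          (ω ^ (L / ℓ) + ωb ^ (L / ℓ)) ^ (-(ArithmeticFunction.moebius ℓ)) ∧
      ((Φ * Ψ : ℤ) : ℝ) = ω ^ L + ωb ^ L := by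
  classical
  obtain ⟨t, n, ht, hn⟩ := hint
  -- all the traces are integers
  have hSint : ∀ d : ℕ, ∃ k : ℤ, (k : ℝ) = ω ^ d + ωb ^ d := by
    intro d
    induction d using Nat.strong_induction_on with
    | _ d ih =>
      match d, ih with
      | 0, _ => exact ⟨2, by norm_num⟩
      | 1, _ => exact ⟨t, by simpa using ht⟩
      | (e+2), ih =>
        obtain ⟨k1, hk1⟩ := ih (e+1) (by omega)
        obtain ⟨k0, hk0⟩ := ih e (by omega)
        refine ⟨t * k1 - n * k0, ?_⟩
        push_cast
        rw [ht, hn, hk1, hk0]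
        ring
  choose k hk using hSint
  have hkC : ∀ d : ℕ, ((k d : ℤ) : ℂ) = (ω : ℂ) ^ d + (ωb : ℂ) ^ d := by
    intro d
    have := hk d
    have : ((k d : ℝ) : ℂ) = ((ω ^ d + ωb ^ d : ℝ) : ℂ) := by rw [this]
    simpa using this
  -- the key construction
  have hint_cast : ∀ z : ℤ, IsIntegral ℤ ((z : ℤ) : ℂ) := fun z => by
    have h0 := isIntegral_algebraMap (R := ℤ) (A := ℂ) (x := z)
    simpa using h0
  have hG : ∃ G : ℕ → ℂ, (∀ d, d ∣ L → IsIntegral ℤ (G d)) ∧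
      ∀ m, m ∣ L → (ω : ℂ) ^ m + (ωb : ℂ) ^ m = ∏ d ∈ m.divisors, G d := by
    by_cases hbz : ωb = 0
    · -- ωb = 0, so ω = t is an integer
      have hωt : (t : ℝ) = ω := by rw [ht, hbz, add_zero]
      have hωtC : ((t : ℤ) : ℂ) = (ω : ℂ) := by
        have h1 : (((t : ℤ) : ℝ) : ℂ) = ((ω : ℝ) : ℂ) := by rw [hωt]
        simpa using h1
      refine ⟨fun d => (t : ℂ) ^ d.totient, fun d _ => (hint_cast t).pow _, fun m hm => ?_⟩
      have hm0 : m ≠ 0 := by rintro rfl; exact hpos.ne' (Nat.eq_zero_of_zero_dvd hm)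
      rw [Finset.prod_pow_eq_pow_sum, Nat.sum_totient, hωtC, hbz]
      simp [zero_pow hm0]
    by_cases heq : ω = ωb
    · -- degenerate case : ω = ωb is an integer
      have htsq : t ^ 2 = 4 * n := by
        have hcast : ((t ^ 2 : ℤ) : ℝ) = ((4 * n : ℤ) : ℝ) := by
          push_cast
          rw [ht, hn, ← heq]
          ring
        exact_mod_cast hcast
      have hteven : Even t := by
        have h2 : Even (t ^ 2) := ⟨2 * n, by omega⟩
        exact (Int.even_pow.mp h2).1
      obtain ⟨c, hc⟩ := hteven
      have hcω : ((c : ℤ) : ℝ) = ω := by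
        have h1 : ((t : ℤ) : ℝ) = 2 * ω := by rw [ht, ← heq]; ring
        have h2 : ((c : ℤ) : ℝ) * 2 = 2 * ω := by
          rw [← h1, hc]; push_cast; ring
        linarith
      have hcC : ((c : ℤ) : ℂ) = (ω : ℂ) := by
        have h1 : (((c : ℤ) : ℝ) : ℂ) = ((ω : ℝ) : ℂ) := by rw [hcω]
        simpa using h1
      refine ⟨fun d => (if d = 1 then 2 else 1) * (c : ℂ) ^ d.totient,
        fun d _ => ?_, fun m hm => ?_⟩
      · show IsIntegral ℤ ((if d = 1 then (2:ℂ) else 1) * (c : ℂ) ^ d.totient)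
        by_cases hd1 : d = 1
        · rw [if_pos hd1, show (2 : ℂ) = ((2:ℤ) : ℂ) by norm_num]
          exact (hint_cast 2).mul ((hint_cast c).pow _)
        · rw [if_neg hd1, one_mul]
          exact (hint_cast c).pow _
      · have hm0 : m ≠ 0 := by rintro rfl; exact hpos.ne' (Nat.eq_zero_of_zero_dvd hm)
        rw [Finset.prod_mul_distrib, Finset.prod_ite_eq',
          Finset.prod_pow_eq_pow_sum, Nat.sum_totient,
          if_pos (Nat.one_mem_divisors.mpr hm0), hcC, ← heq]
        ring
    · -- main case : ωb ≠ 0 and ω ≠ ωb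
      have hy : (ωb : ℂ) ≠ 0 := Complex.ofReal_ne_zero.mpr hbz
      have h1 : (ω : ℂ) + (ωb : ℂ) = (t : ℂ) := by
        have := congrArg (fun r : ℝ => (r : ℂ)) ht
        push_cast at this
        exact this.symm
      have h2 : (ω : ℂ) * (ωb : ℂ) = (n : ℂ) := by
        have := congrArg (fun r : ℝ => (r : ℂ)) hn
        push_cast at this
        exact this.symm
      have hxint : IsIntegral ℤ ((ω : ℂ)) := by
        refine ⟨X ^ 2 - (C t * X - C n), ?_, ?_⟩
        · apply Polynomial.monic_X_pow_sub
          have hdeg : (C t * X - C n).degree ≤ 1 := by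
            rw [sub_eq_add_neg, ← Polynomial.C_neg]
            exact Polynomial.degree_linear_le
          exact lt_of_le_of_lt hdeg (by norm_num)
        · simp only [Polynomial.eval₂_sub, Polynomial.eval₂_mul,
            Polynomial.eval₂_pow, Polynomial.eval₂_X, Polynomial.eval₂_C]
          simp only [algebraMap_int_eq, eq_intCast]
          linear_combination (ω : ℂ) * h1 - h2
      have hyint : IsIntegral ℤ ((ωb : ℂ)) := by
        have hyeq : (ωb : ℂ) = ((t : ℤ) : ℂ) - (ω : ℂ) := by rw [← h1]; ring
        rw [hyeq]
        exact (hint_cast t).sub hxint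
      refine ⟨fun d => ∏ ζ ∈ primitiveRoots (2 * d) ℂ, ((ω : ℂ) - ζ * (ωb : ℂ)),
        fun d hd => ?_, fun m hm => ?_⟩
      · have hd0 : d ≠ 0 := by rintro rfl; exact hpos.ne' (Nat.eq_zero_of_zero_dvd hd)
        refine IsIntegral.prod _ fun ζ hζ => ?_
        have hζp : IsPrimitiveRoot ζ (2 * d) :=
          (mem_primitiveRoots (by omega : 0 < 2 * d)).mp hζ
        have hζint : IsIntegral ℤ ζ :=
          ⟨X ^ (2 * d) - C 1, Polynomial.monic_X_pow_sub_C 1 (by omega), by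
            simp [hζp.pow_eq_one]⟩
        exact hxint.sub (hζint.mul hyint)
      · have hm0 : m ≠ 0 := by rintro rfl; exact hpos.ne' (Nat.eq_zero_of_zero_dvd hm)
        have hmodd : Odd m := by
          rcases Nat.even_or_odd m with h | h
          · exfalso
            have h2L : (2 : ℕ) ∣ L := dvd_trans h.two_dvd hm
            rw [Nat.odd_iff] at hodd
            omega
          · exact h
        have key := pow_sub_pow_eq_prod' (ω : ℂ) (ωb : ℂ) hy
          (k := 2 * m) (by omega)
        rw [prod_divisors_two_mul' _ hmodd hm0,
          ← pow_sub_pow_eq_prod' (ω : ℂ) (ωb : ℂ) hy hm0] at key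
        have hne : (ω : ℂ) ^ m - (ωb : ℂ) ^ m ≠ 0 := by
          have hne' : ω ^ m ≠ ωb ^ m :=
            fun h => heq ((hmodd.strictMono_pow (R := ℝ)).injective h)
          intro h0
          apply hne'
          have hcast : ((ω ^ m : ℝ) : ℂ) = ((ωb ^ m : ℝ) : ℂ) := by
            push_cast
            rw [← sub_eq_zero]
            exact h0
          exact_mod_cast hcast
        apply mul_left_cancel₀ hne
        rw [← key, mul_comm 2 m, pow_mul, pow_mul]
        ring
  obtain ⟨G, hGint, hGprod⟩ := hG
  have hGne : ∀ d, d ∣ L → G d ≠ 0 := by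
    intro d hd hzero
    have hdmem : d ∈ L.divisors := Nat.mem_divisors.mpr ⟨hd, hpos.ne'⟩
    have hself : d ∈ d.divisors :=
      Nat.mem_divisors.mpr ⟨dvd_rfl, fun h => hpos.ne' (by simpa [h] using hd)⟩
    have h0 : (ω : ℂ) ^ d + (ωb : ℂ) ^ d = 0 := by
      rw [hGprod d hd]
      exact Finset.prod_eq_zero hself hzero
    apply hnz d hdmem
    have : ((ω ^ d + ωb ^ d : ℝ) : ℂ) = 0 := by push_cast; simpa using h0
    exact_mod_cast this
  -- Möbius inversion, on the set of divisors of L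
  set f : ℕ → ℂ := fun i => if i ∣ L then G i else 1 with hf_def
  have hmoeb : ∏ e ∈ L.divisorsAntidiagonal,
      (∏ d ∈ e.2.divisors, f d) ^ (ArithmeticFunction.moebius e.1) = f L := by
    refine (ArithmeticFunction.prod_eq_iff_prod_pow_moebius_eq_on_of_nonzero
      {i : ℕ | i ∣ L} (fun u v huv hv => huv.trans hv)
      (f := f) (g := fun i => ∏ d ∈ i.divisors, f d) ?_ ?_).mp
      (fun _ _ _ => rfl) L hpos (dvd_refl L)
    · intro m hm
      by_cases h : m ∣ L
      · simpa [hf_def, h] using hGne m h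
      · simp [hf_def, h]
    · intro m hm
      rw [Finset.prod_ne_zero_iff]
      intro i hi
      by_cases h : i ∣ L
      · simpa [hf_def, h] using hGne i h
      · simp [hf_def, h]
  have hgval : ∀ b, b ∣ L → (∏ d ∈ b.divisors, f d) = (ω : ℂ) ^ b + (ωb : ℂ) ^ b := by
    intro b hb
    rw [hGprod b hb]
    refine Finset.prod_congr rfl fun d hd => ?_
    have : d ∣ L := (Nat.mem_divisors.mp hd).1.trans hb
    simp [hf_def, this]
  -- the complex Φ equals G L
  have hPhiC : ∏ i ∈ L.divisors,
      ((ω : ℂ) ^ (L / i) + (ωb : ℂ) ^ (L / i)) ^ (ArithmeticFunction.moebius i) = G L := by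
    have h1 := hmoeb
    rw [Nat.prod_divisorsAntidiagonal
      (fun i j => (∏ d ∈ j.divisors, f d) ^ (ArithmeticFunction.moebius i))] at h1
    have h2 : ∀ i ∈ L.divisors, (∏ d ∈ (L / i).divisors, f d) ^ (ArithmeticFunction.moebius i)
        = ((ω : ℂ) ^ (L / i) + (ωb : ℂ) ^ (L / i)) ^ (ArithmeticFunction.moebius i) := by
      intro i hi
      rw [hgval (L / i) (Nat.div_dvd_of_dvd (Nat.mem_divisors.mp hi).1)]
    rw [Finset.prod_congr rfl h2] at h1
    rw [h1]
    simp [hf_def]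
  -- nonvanishing of the complex traces on divisors
  have hSCne : ∀ d ∈ L.divisors, (ω : ℂ) ^ d + (ωb : ℂ) ^ d ≠ 0 := by
    intro d hd h0
    apply hnz d hd
    have : ((ω ^ d + ωb ^ d : ℝ) : ℂ) = 0 := by push_cast; simpa using h0
    exact_mod_cast this
  have hLmem : L ∈ L.divisors := Nat.mem_divisors.mpr ⟨dvd_rfl, hpos.ne'⟩
  -- the complex Ψ equals the product of G over proper divisors
  have hPsiC : ∏ i ∈ L.divisors.filter (fun ℓ => 1 < ℓ),
      ((ω : ℂ) ^ (L / i) + (ωb : ℂ) ^ (L / i)) ^ (-(ArithmeticFunction.moebius i))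
      = ∏ d ∈ L.divisors.erase L, G d := by
    have hmul := phi_mul_psi' (fun d => (ω : ℂ) ^ d + (ωb : ℂ) ^ d) hpos hSCne
    rw [hPhiC] at hmul
    have hSL : (ω : ℂ) ^ L + (ωb : ℂ) ^ L = G L * ∏ d ∈ L.divisors.erase L, G d := by
      rw [hGprod L dvd_rfl, Finset.mul_prod_erase _ _ hLmem]
    rw [hSL] at hmul
    exact mul_left_cancel₀ (hGne L dvd_rfl) hmul
  -- rational values
  set qΦ : ℚ := ∏ i ∈ L.divisors, (k (L / i) : ℚ) ^ (ArithmeticFunction.moebius i) with hqΦ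
  set qΨ : ℚ := ∏ i ∈ L.divisors.filter (fun ℓ => 1 < ℓ),
    (k (L / i) : ℚ) ^ (-(ArithmeticFunction.moebius i)) with hqΨ
  have hqΦC : ((qΦ : ℚ) : ℂ) = G L := by
    rw [← hPhiC, hqΦ]
    push_cast
    refine Finset.prod_congr rfl fun i _ => ?_
    rw [hkC]
  have hqΨC : ((qΨ : ℚ) : ℂ) = ∏ d ∈ L.divisors.erase L, G d := by
    rw [← hPsiC, hqΨ]
    push_cast
    refine Finset.prod_congr rfl fun i _ => ?_
    rw [hkC]
  -- they are algebraic integers, hence integers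
  have hdesc : ∀ q : ℚ, IsIntegral ℤ ((q : ℚ) : ℂ) → ∃ z : ℤ, (z : ℚ) = q := by
    intro q hq
    have h1 : IsIntegral ℤ q := by
      rw [show ((q : ℚ) : ℂ) = algebraMap ℚ ℂ q from (eq_ratCast _ _).symm] at hq
      exact (isIntegral_algebraMap_iff (algebraMap ℚ ℂ).injective).mp hq
    obtain ⟨z, hz⟩ := IsIntegrallyClosed.isIntegral_iff.mp h1
    exact ⟨z, by simpa using hz⟩
  obtain ⟨Φz, hΦz⟩ := hdesc qΦ (by rw [hqΦC]; exact hGint L dvd_rfl)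
  obtain ⟨Ψz, hΨz⟩ := hdesc qΨ (by
    rw [hqΨC]
    exact IsIntegral.prod _ fun d hd =>
      hGint d (Nat.mem_divisors.mp (Finset.mem_erase.mp hd).2).1)
  -- real values
  have hΦreal : ((Φz : ℤ) : ℝ) =
      ∏ ℓ ∈ L.divisors, (ω ^ (L / ℓ) + ωb ^ (L / ℓ)) ^ (ArithmeticFunction.moebius ℓ) := by
    have : ((Φz : ℤ) : ℝ) = ((qΦ : ℚ) : ℝ) := by rw [← hΦz]; push_cast; ring
    rw [this, hqΦ]
    push_cast
    refine Finset.prod_congr rfl fun i _ => ?_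
    rw [hk]
  have hΨreal : ((Ψz : ℤ) : ℝ) =
      ∏ ℓ ∈ L.divisors.filter (fun ℓ => 1 < ℓ),
        (ω ^ (L / ℓ) + ωb ^ (L / ℓ)) ^ (-(ArithmeticFunction.moebius ℓ)) := by
    have : ((Ψz : ℤ) : ℝ) = ((qΨ : ℚ) : ℝ) := by rw [← hΨz]; push_cast; ring
    rw [this, hqΨ]
    push_cast
    refine Finset.prod_congr rfl fun i _ => ?_
    rw [hk]
  refine ⟨Φz, Ψz, hΦreal, hΨreal, ?_⟩
  push_cast
  rw [hΦreal, hΨreal]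
  exact phi_mul_psi' (fun d => ω ^ d + ωb ^ d) hpos hnz
end

section
/- Let ω be an element of a real quadratic field embedded in ℝ (with conjugate ω̄) satisfying |ω̄/ω| ≤ 1/2. Then for every positive integer m, e^{−2^{1−m}} ≤ |ω^m + ω̄^m| / |ω|^m ≤ e^{2^{1−m}}. -/
/-- Let `ω = a + b√D` be a nonzero element of a real quadratic field embedded in `ℝ`, with
conjugate `ω̄ = a - b√D`, satisfying `|ω̄/ω| ≤ 1/2`. Then for every positive integer `m`,
`e^{-2^{1-m}} ≤ |ω^m + ω̄^m| / |ω|^m ≤ e^{2^{1-m}}`. -/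
theorem trace_pow_size_estimate
    (D : ℕ) (hD : Squarefree D) (hD1 : 1 < D) (a b : ℚ)
    (ω ωb : ℝ) (hω : ω = a + b * Real.sqrt D) (hωb : ωb = a - b * Real.sqrt D)
    (hω0 : ω ≠ 0) (hratio : |ωb / ω| ≤ 1 / 2)
    (m : ℕ) (hm : 1 ≤ m) :
    Real.exp (-(2 : ℝ) ^ ((1 : ℤ) - m)) ≤ |ω ^ m + ωb ^ m| / |ω| ^ m ∧
    |ω ^ m + ωb ^ m| / |ω| ^ m ≤ Real.exp ((2 : ℝ) ^ ((1 : ℤ) - m)) := by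
  set r : ℝ := ωb / ω with hr
  have key : |ω ^ m + ωb ^ m| / |ω| ^ m = |1 + r ^ m| := by
    rw [← abs_pow, ← abs_div]
    congr 1
    field_simp [hr]
    rw [hr, div_pow, mul_add, mul_one, mul_div_assoc', mul_div_cancel_left₀ _ (pow_ne_zero m hω0)]
  have ht : (2 : ℝ) ^ ((1 : ℤ) - m) = 2 * (1/2 : ℝ) ^ m := by
    rw [zpow_sub₀ (two_ne_zero), zpow_one, zpow_natCast]
    rw [div_pow, one_pow]
    ring
  set t := (1/2 : ℝ) ^ m with htdef
  have ht0 : (0:ℝ) ≤ t := by positivity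
  have htle : t ≤ 1/2 := by
    calc t ≤ (1/2 : ℝ) ^ 1 := pow_le_pow_of_le_one (by norm_num) (by norm_num) hm
    _ = 1/2 := pow_one _
  have hrm : |r ^ m| ≤ t := by
    rw [abs_pow]
    exact pow_le_pow_left₀ (abs_nonneg _) hratio m
  have h1 : 1 - t ≤ |1 + r ^ m| := by
    have h := abs_add_le (1 + r ^ m) (-(r ^ m))
    simp only [add_neg_cancel_right, abs_one, abs_neg] at h
    linarith
  have h2 : |1 + r ^ m| ≤ 1 + t := by
    have h := abs_add_le 1 (r ^ m)
    simp only [abs_one] at h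
    linarith
  have hexp : 1 + 2 * t ≤ Real.exp (2 * t) := by
    have := Real.add_one_le_exp (2 * t); linarith
  have hE : Real.exp (-(2 * t)) * Real.exp (2 * t) = 1 := by
    rw [← Real.exp_add]; ring_nf; exact Real.exp_zero
  have hlow : Real.exp (-(2 * t)) ≤ 1 - t := by
    have hpos := Real.exp_pos (-(2 * t))
    have h3 : Real.exp (-(2 * t)) * (1 + 2 * t) ≤ 1 := by nlinarith
    nlinarith
  rw [key, ht]
  constructor
  · linarith
  · calc |1 + r ^ m| ≤ 1 + t := h2
      _ ≤ Real.exp (2 * t) := by linarith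
end

section
/- Let ω be an algebraic integer in a real quadratic field with |ω̄/ω| ≤ 1/2 and let L be an odd squarefree positive integer. Then with Φ_L(ω) = ∏_{ℓ|L} tr(ω^{L/ℓ})^{μ(ℓ)} and Ψ_L(ω) = tr(ω^L)/Φ_L(ω), one has e^{−4}|ω|^{φ(L)} ≤ |Φ_L(ω)| ≤ e^{4}|ω|^{φ(L)} and e^{−4}|ω|^{L−φ(L)} ≤ |Ψ_L(ω)| ≤ e^{4}|ω|^{L−φ(L)}, where φ is Euler's totient function. -/
private lemma abs_zpow' (x : ℝ) (n : ℤ) : |x ^ n| = |x| ^ n := by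
  rcases n with m | m
  · simp [abs_pow]
  · rw [zpow_negSucc, zpow_negSucc, abs_inv, abs_pow]

private lemma geo_sum_le (L : ℕ) : ∑ m ∈ Finset.Icc 1 L, 2 * ((1:ℝ)/2) ^ m ≤ 2 := by
  have key : ∀ n : ℕ, ∑ m ∈ Finset.Icc 1 n, ((1:ℝ)/2) ^ m = 1 - (1/2) ^ n := by
    intro n
    induction n with
    | zero => simp
    | succ k ih =>
        rw [Finset.sum_Icc_succ_top (by omega), ih]
        ring
  rw [← Finset.mul_sum, key]
  have : (0:ℝ) ≤ (1/2) ^ L := by positivity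
  linarith

private lemma totient_eq_sum_moebius (L : ℕ) (hpos : 0 < L) :
    (L.totient : ℝ) = ∑ ℓ ∈ L.divisors, (ArithmeticFunction.moebius ℓ : ℝ) * ((L / ℓ : ℕ) : ℝ) := by
  have h := (ArithmeticFunction.sum_eq_iff_sum_smul_moebius_eq
      (R := ℝ) (f := fun i => (Nat.totient i : ℝ)) (g := fun n => (n : ℝ))).mp
      (fun n _ => by exact_mod_cast congrArg (Nat.cast (R := ℝ)) (Nat.sum_totient n)) L hpos
  rw [← h, ← Nat.sum_divisorsAntidiagonal (fun i j => (ArithmeticFunction.moebius i : ℝ) * ((j : ℕ) : ℝ))]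
  exact Finset.sum_congr rfl fun x _ => by push_cast [zsmul_eq_mul]; ring



/-- Let `ω = a + b√D` be a quadratic algebraic integer with `|ω̄/ω| ≤ 1/2` and `L` odd
squarefree positive. With `Φ_L(ω) = ∏_{ℓ∣L} tr(ω^{L/ℓ})^{μ(ℓ)}` and `Ψ_L(ω) = tr(ω^L)/Φ_L(ω)`:
`e^{-4}|ω|^{φ(L)} ≤ |Φ_L(ω)| ≤ e^4 |ω|^{φ(L)}` and
`e^{-4}|ω|^{L-φ(L)} ≤ |Ψ_L(ω)| ≤ e^4 |ω|^{L-φ(L)}`. -/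
theorem trace_factors_size
    (D : ℕ) (hD : Squarefree D) (hD1 : 1 < D) (a b : ℚ)
    (ω ωb : ℝ) (hω : ω = a + b * Real.sqrt D) (hωb : ωb = a - b * Real.sqrt D)
    (hint : ∃ t n : ℤ, (t : ℝ) = ω + ωb ∧ (n : ℝ) = ω * ωb)
    (hω0 : ω ≠ 0) (hratio : |ωb / ω| ≤ 1 / 2)
    (L : ℕ) (hodd : Odd L) (hsf : Squarefree L) (hpos : 0 < L)
    (Φ Ψ : ℝ)
    (hΦ : Φ = ∏ ℓ ∈ L.divisors, (ω ^ (L / ℓ) + ωb ^ (L / ℓ)) ^ (ArithmeticFunction.moebius ℓ))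
    (hΨ : Ψ = (ω ^ L + ωb ^ L) / Φ) :
    Real.exp (-4) * |ω| ^ L.totient ≤ |Φ| ∧ |Φ| ≤ Real.exp 4 * |ω| ^ L.totient ∧
    Real.exp (-4) * |ω| ^ (L - L.totient) ≤ |Ψ| ∧ |Ψ| ≤ Real.exp 4 * |ω| ^ (L - L.totient) := by
  have hR0 : (0:ℝ) < |ω| := abs_pos.mpr hω0
  set r : ℝ := ωb / ω with hrdef
  -- bound on |r^m|
  have hrm : ∀ m : ℕ, |r ^ m| ≤ (1/2) ^ m := by
    intro m; rw [abs_pow]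
    exact pow_le_pow_left₀ (abs_nonneg r) hratio m
  have hhalf : ∀ m : ℕ, 1 ≤ m → ((1:ℝ)/2) ^ m ≤ 1/2 := by
    intro m hm
    exact pow_le_of_le_one (by norm_num) (by norm_num) (by omega)
  -- lower bound on |1 + r^m|
  have hc_lb : ∀ m : ℕ, 1 ≤ m → 1 - ((1:ℝ)/2) ^ m ≤ |1 + r ^ m| := by
    intro m hm
    have h1 := hrm m
    have h4 := abs_add_le (1 + r ^ m) (-(r ^ m))
    rw [abs_neg] at h4
    have : (1 + r ^ m) + -(r ^ m) = 1 := by ring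
    rw [this, abs_one] at h4
    linarith
  have hc_half : ∀ m : ℕ, 1 ≤ m → (1:ℝ)/2 ≤ |1 + r ^ m| := by
    intro m hm; have := hc_lb m hm; have := hhalf m hm; linarith
  have hc_ub : ∀ m : ℕ, |1 + r ^ m| ≤ 1 + ((1:ℝ)/2) ^ m := by
    intro m
    have h4 := abs_add_le 1 (r ^ m)
    rw [abs_one] at h4
    have := hrm m; linarith
  have hc_pos : ∀ m : ℕ, 1 ≤ m → (0:ℝ) < |1 + r ^ m| := by
    intro m hm; have := hc_half m hm; linarith
  -- log bound
  have hlogc : ∀ m : ℕ, 1 ≤ m → |Real.log (|1 + r ^ m|)| ≤ 2 * ((1:ℝ)/2) ^ m := by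
    intro m hm
    set x : ℝ := (1/2) ^ m with hx
    have hx0 : (0:ℝ) < x := by positivity
    have hx2 : x ≤ 1/2 := hhalf m hm
    set c : ℝ := |1 + r ^ m| with hc
    have hcl : 1 - x ≤ c := hc_lb m hm
    have hcu : c ≤ 1 + x := hc_ub m
    have hcp : 0 < c := hc_pos m hm
    rw [abs_le]
    constructor
    · -- -2x ≤ log c : show exp(-2x) ≤ c
      rw [neg_le, ← Real.log_inv, hc]
      have hinv : (0:ℝ) < c⁻¹ := by positivity
      have := Real.log_le_sub_one_of_pos hinv
      have hcinv : c⁻¹ ≤ (1 - x)⁻¹ := by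
        apply inv_anti₀ <;> linarith
      have h2 : (1 - x)⁻¹ - 1 ≤ 2 * x := by
        have hpos' : (0:ℝ) < 1 - x := by linarith
        have e : (1 - x)⁻¹ - 1 = x / (1 - x) := by field_simp; ring
        rw [e, div_le_iff₀ hpos']
        nlinarith
      calc Real.log c⁻¹ ≤ c⁻¹ - 1 := this
        _ ≤ (1 - x)⁻¹ - 1 := by linarith
        _ ≤ 2 * x := h2
    · calc Real.log c ≤ c - 1 := Real.log_le_sub_one_of_pos hcp
        _ ≤ x := by linarith
        _ ≤ 2 * x := by linarith
  -- trace factorization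
  have htr : ∀ m : ℕ, ω ^ m + ωb ^ m = ω ^ m * (1 + r ^ m) := by
    intro m
    rw [hrdef, div_pow, mul_add, mul_one, mul_div_cancel₀]
    exact pow_ne_zero m hω0
  have htrabs : ∀ m : ℕ, |ω ^ m + ωb ^ m| = |ω| ^ m * |1 + r ^ m| := by
    intro m; rw [htr m, abs_mul, abs_pow]
  have htrne : ∀ m : ℕ, 1 ≤ m → ω ^ m + ωb ^ m ≠ 0 := by
    intro m hm
    intro h
    have := htrabs m
    rw [h, abs_zero] at this
    have h1 := hc_half m hm
    have h2 : (0:ℝ) < |ω| ^ m := pow_pos hR0 m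
    nlinarith
  -- m = L / ℓ positivity for divisors
  have hmpos : ∀ ℓ ∈ L.divisors, 1 ≤ L / ℓ := by
    intro ℓ hℓ
    rw [Nat.mem_divisors] at hℓ
    obtain ⟨hdvd, _⟩ := hℓ
    have hℓpos : 0 < ℓ := Nat.pos_of_dvd_of_pos hdvd hpos
    exact Nat.one_le_div_iff hℓpos |>.mpr (Nat.le_of_dvd hpos hdvd)
  -- |Φ| as product
  have hΦabs : |Φ| = ∏ ℓ ∈ L.divisors, |ω ^ (L / ℓ) + ωb ^ (L / ℓ)| ^ (ArithmeticFunction.moebius ℓ) := by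
    rw [hΦ, Finset.abs_prod]
    exact Finset.prod_congr rfl fun ℓ _ => abs_zpow' _ _
  have hfacpos : ∀ ℓ ∈ L.divisors, (0:ℝ) < |ω ^ (L / ℓ) + ωb ^ (L / ℓ)| ^ (ArithmeticFunction.moebius ℓ) := by
    intro ℓ hℓ
    have := htrne (L / ℓ) (hmpos ℓ hℓ)
    exact zpow_pos (abs_pos.mpr this) _
  have hΦpos : 0 < |Φ| := by
    rw [hΦabs]; exact Finset.prod_pos hfacpos
  -- the error sum S
  set S : ℝ := ∑ ℓ ∈ L.divisors, (ArithmeticFunction.moebius ℓ : ℝ) * Real.log |1 + r ^ (L / ℓ)| with hS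
  -- log |Φ|
  have hlogΦ : Real.log |Φ| = (L.totient : ℝ) * Real.log |ω| + S := by
    rw [hΦabs, Real.log_prod (fun ℓ hℓ => (hfacpos ℓ hℓ).ne')]
    have : ∀ ℓ ∈ L.divisors,
        Real.log (|ω ^ (L / ℓ) + ωb ^ (L / ℓ)| ^ (ArithmeticFunction.moebius ℓ)) =
          (ArithmeticFunction.moebius ℓ : ℝ) * (((L / ℓ : ℕ) : ℝ) * Real.log |ω|)
          + (ArithmeticFunction.moebius ℓ : ℝ) * Real.log |1 + r ^ (L / ℓ)| := by
      intro ℓ hℓ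
      rw [Real.log_zpow, htrabs,
        Real.log_mul (pow_pos hR0 _).ne' (hc_pos _ (hmpos ℓ hℓ)).ne',
        Real.log_pow]
      ring
    rw [Finset.sum_congr rfl this, Finset.sum_add_distrib, hS]
    congr 1
    rw [totient_eq_sum_moebius L hpos, Finset.sum_mul]
    exact Finset.sum_congr rfl fun ℓ _ => by ring
  -- bound |S| ≤ 2
  have hμ : ∀ ℓ : ℕ, |(ArithmeticFunction.moebius ℓ : ℝ)| ≤ 1 := by
    intro ℓ
    rcases ArithmeticFunction.moebius_eq_or ℓ with h | h | h <;> rw [h] <;> norm_num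
  have hSbound : |S| ≤ 2 := by
    calc |S| ≤ ∑ ℓ ∈ L.divisors, |(ArithmeticFunction.moebius ℓ : ℝ) * Real.log (|1 + r ^ (L / ℓ)|)| :=
          Finset.abs_sum_le_sum_abs _ _
      _ ≤ ∑ ℓ ∈ L.divisors, 2 * ((1:ℝ)/2) ^ (L / ℓ) := by
          apply Finset.sum_le_sum
          intro ℓ hℓ
          rw [abs_mul]
          calc |(ArithmeticFunction.moebius ℓ : ℝ)| * |Real.log (|1 + r ^ (L / ℓ)|)|
              ≤ 1 * (2 * ((1:ℝ)/2) ^ (L / ℓ)) := by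
                apply mul_le_mul (hμ ℓ) (hlogc _ (hmpos ℓ hℓ)) (abs_nonneg _) zero_le_one
            _ = 2 * ((1:ℝ)/2) ^ (L / ℓ) := one_mul _
      _ = ∑ m ∈ L.divisors, 2 * ((1:ℝ)/2) ^ m :=
          Nat.sum_div_divisors L (fun m => 2 * ((1:ℝ)/2) ^ m)
      _ ≤ ∑ m ∈ Finset.Icc 1 L, 2 * ((1:ℝ)/2) ^ m := by
          apply Finset.sum_le_sum_of_subset_of_nonneg
          · intro m hm
            rw [Nat.mem_divisors] at hm
            rw [Finset.mem_Icc]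
            exact ⟨Nat.pos_of_dvd_of_pos hm.1 hpos, Nat.le_of_dvd hpos hm.1⟩
          · intro m _ _; positivity
      _ ≤ 2 := geo_sum_le L
  have hSlb := (abs_le.mp hSbound).1
  have hSub := (abs_le.mp hSbound).2
  -- Φ bounds
  have hexp : ∀ k : ℕ, Real.exp ((k : ℝ) * Real.log |ω|) = |ω| ^ k := by
    intro k
    rw [Real.exp_nat_mul, Real.exp_log hR0]
  have hΦlb : Real.exp (-4) * |ω| ^ L.totient ≤ |Φ| := by
    have h1 : Real.exp (-4) * |ω| ^ L.totient
        = Real.exp (-4 + (L.totient : ℝ) * Real.log |ω|) := by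
      rw [Real.exp_add, hexp]
    rw [h1, ← Real.exp_log hΦpos]
    apply Real.exp_le_exp.mpr
    rw [hlogΦ]; linarith
  have hΦub : |Φ| ≤ Real.exp 4 * |ω| ^ L.totient := by
    have h1 : Real.exp 4 * |ω| ^ L.totient
        = Real.exp (4 + (L.totient : ℝ) * Real.log |ω|) := by
      rw [Real.exp_add, hexp]
    rw [h1, ← Real.exp_log hΦpos]
    apply Real.exp_le_exp.mpr
    rw [hlogΦ]; linarith
  refine ⟨hΦlb, hΦub, ?_, ?_⟩ <;>
  · -- Ψ bounds
    have hΦne : Φ ≠ 0 := fun h => by simp [h] at hΦpos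
    have htrLne : ω ^ L + ωb ^ L ≠ 0 := htrne L hpos
    have hΨpos : 0 < |Ψ| := by
      rw [hΨ, abs_div]
      exact div_pos (abs_pos.mpr htrLne) hΦpos
    have hlogΨ : Real.log |Ψ| = ((L - L.totient : ℕ) : ℝ) * Real.log |ω|
        + (Real.log |1 + r ^ L| - S) := by
      rw [hΨ, abs_div, Real.log_div (abs_pos.mpr htrLne).ne' hΦpos.ne', hlogΦ,
        htrabs, Real.log_mul (pow_pos hR0 _).ne' (hc_pos _ hpos).ne', Real.log_pow,
        Nat.cast_sub (Nat.totient_le L)]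
      ring
    have hcL := hlogc L hpos
    have hcL2 : ((1:ℝ)/2) ^ L ≤ 1/2 := hhalf L hpos
    have hcLlb := (abs_le.mp hcL).1
    have hcLub := (abs_le.mp hcL).2
    first
    | · -- lower
        have h1 : Real.exp (-4) * |ω| ^ (L - L.totient)
            = Real.exp (-4 + ((L - L.totient : ℕ) : ℝ) * Real.log |ω|) := by
          rw [Real.exp_add, hexp]
        rw [h1, ← Real.exp_log hΨpos]
        apply Real.exp_le_exp.mpr
        rw [hlogΨ]; linarith
    | · -- upper
        have h1 : Real.exp 4 * |ω| ^ (L - L.totient)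
            = Real.exp (4 + ((L - L.totient : ℕ) : ℝ) * Real.log |ω|) := by
          rw [Real.exp_add, hexp]
        rw [h1, ← Real.exp_log hΨpos]
        apply Real.exp_le_exp.mpr
        rw [hlogΨ]; linarith
end

section
/- There exist two disjoint infinite sequences of odd primes {ℓ_i} and {ℓ'_i} such that ∏_{i=1}^∞ (1 − 1/ℓ_i) = ∏_{i=1}^∞ (1 − 1/ℓ'_i) = 1/2. -/
open Filter Finset Real

namespace GreedyHalf

/-- partial product over a list -/
noncomputable def Pl (l : List ℕ) : ℝ := (l.map (fun q => (1:ℝ) - 1/q)).prod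

/-- admissible next elements -/
def A (S : Set ℕ) (l : List ℕ) : Set ℕ :=
  {p | p ∈ S ∧ (∀ q ∈ l, q < p) ∧ 1/2 < Pl l * (1 - 1/(p:ℝ))}

/-- greedy next element -/
noncomputable def nxt (S : Set ℕ) (l : List ℕ) : ℕ := sInf (A S l)

noncomputable def chain (S : Set ℕ) : ℕ → List ℕ
  | 0 => []
  | n+1 => chain S n ++ [nxt S (chain S n)]

lemma thresh {P : ℝ} (hP : 1/2 < P) {p : ℕ} (hp : P / (P - 1/2) < p) :
    1/2 < P * (1 - 1/(p:ℝ)) := by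
  have hden : 0 < P - 1/2 := by linarith
  have hP0 : 0 < P := by linarith
  have hp0 : 0 < (p:ℝ) := lt_trans (div_pos hP0 hden) hp
  rw [div_lt_iff₀ hden] at hp
  have h2 : P / p < P - 1/2 := (div_lt_iff₀ hp0).2 (by linarith)
  have h3 : P * (1 - 1/(p:ℝ)) = P - P/p := by ring
  rw [h3]; linarith

lemma Pl_append (l : List ℕ) (p : ℕ) :
    Pl (l ++ [p]) = Pl l * (1 - 1/(p:ℝ)) := by
  simp [Pl]

lemma nxt_mem {S : Set ℕ} (hinf : S.Infinite) {l : List ℕ}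
    (hP : 1/2 < Pl l) : nxt S l ∈ A S l := by
  apply Nat.sInf_mem
  have hden : 0 < Pl l - 1/2 := by linarith
  obtain ⟨N, hN⟩ := exists_nat_gt (Pl l / (Pl l - 1/2))
  obtain ⟨p, hpS, hp⟩ := hinf.exists_gt (max N l.sum)
  refine ⟨p, hpS, ?_, ?_⟩
  · intro q hq
    have : q ≤ l.sum := List.single_le_sum (fun x _ => Nat.zero_le x) q hq
    exact lt_of_le_of_lt (this.trans (le_max_right _ _)) hp
  · apply thresh hP
    have : (N:ℝ) ≤ p := by
      exact_mod_cast ((le_max_left N l.sum).trans hp.le)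
    linarith

variable {S : Set ℕ} (hinf : S.Infinite)

/-- the greedy sequence -/
noncomputable def gf (S : Set ℕ) (n : ℕ) : ℕ := nxt S (chain S n)

lemma Pl_chain (hinf : S.Infinite) : ∀ n, 1/2 < Pl (chain S n) := by
  intro n
  induction n with
  | zero => norm_num [Pl, chain]
  | succ n ih =>
      have h := nxt_mem hinf ih
      show 1/2 < Pl (chain S n ++ [nxt S (chain S n)])
      rw [Pl_append]
      exact h.2.2

lemma gf_mem (hinf : S.Infinite) (n : ℕ) : gf S n ∈ A S (chain S n) :=
  nxt_mem hinf (Pl_chain hinf n)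

lemma gf_strictMono (hinf : S.Infinite) : StrictMono (gf S) := by
  apply strictMono_nat_of_lt_succ
  intro n
  have h := (gf_mem hinf (n+1)).2.1
  apply h
  show gf S n ∈ chain S n ++ [nxt S (chain S n)]
  simp [gf]

lemma gf_in_S (hinf : S.Infinite) (n : ℕ) : gf S n ∈ S := (gf_mem hinf n).1

lemma chain_mem (hinf : S.Infinite) : ∀ n q, q ∈ chain S n → ∃ i < n, q = gf S i := by
  intro n
  induction n with
  | zero => intro q hq; simp [chain] at hq
  | succ n ih =>
      intro q hq
      rcases List.mem_append.1 hq with h | h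
      · obtain ⟨i, hi, hiq⟩ := ih q h
        exact ⟨i, Nat.lt_succ_of_lt hi, hiq⟩
      · exact ⟨n, Nat.lt_succ_self n, (List.mem_singleton.1 h)⟩

lemma prod_eq (n : ℕ) :
    ∏ i ∈ Finset.range n, (1 - 1/((gf S i : ℕ) : ℝ)) = Pl (chain S n) := by
  induction n with
  | zero => simp [Pl, chain]
  | succ n ih =>
      rw [Finset.prod_range_succ, ih]
      show _ = Pl (chain S n ++ [nxt S (chain S n)])
      rw [Pl_append]; rfl

lemma key (S : Set ℕ) (h2 : ∀ p ∈ S, 2 ≤ p)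
    (hdiv : ¬ Summable (S.indicator fun n => (1:ℝ)/n)) :
    ∃ f : ℕ → ℕ, StrictMono f ∧ (∀ i, f i ∈ S) ∧
      Summable (fun i => (1:ℝ)/(f i)) ∧
      Filter.Tendsto (fun n => ∏ i ∈ Finset.range n, (1 - 1/(f i:ℝ)))
        Filter.atTop (nhds (1/2)) := by
  have hinf : S.Infinite := by
    intro hfin
    apply hdiv
    apply summable_of_ne_finset_zero (s := hfin.toFinset)
    intro b hb
    apply Set.indicator_of_notMem
    simpa using hb
  set f := gf S with hf
  have hmono : StrictMono f := gf_strictMono hinf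
  have hmem : ∀ i, f i ∈ S := gf_in_S hinf
  have hge2 : ∀ i, (2:ℝ) ≤ f i := fun i => by exact_mod_cast h2 _ (hmem i)
  have hfac0 : ∀ i, (0:ℝ) ≤ 1 - 1/(f i:ℝ) := by
    intro i
    have h1 : (1:ℝ) ≤ f i := by linarith [hge2 i]
    have : 1/(f i:ℝ) ≤ 1 := by
      rw [div_le_one (by linarith)]; exact h1
    linarith
  set Q : ℕ → ℝ := fun n => ∏ i ∈ Finset.range n, (1 - 1/(f i:ℝ)) with hQ
  have hQhalf : ∀ n, 1/2 < Q n := fun n => by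
    rw [hQ]; simp only []; rw [prod_eq]; exact Pl_chain hinf n
  have hQpos : ∀ n, 0 < Q n := fun n => lt_trans (by norm_num) (hQhalf n)
  have hQanti : Antitone Q := by
    apply antitone_nat_of_succ_le
    intro n
    rw [hQ]
    simp only []
    rw [Finset.prod_range_succ]
    have h1 : 1 - 1/(f n:ℝ) ≤ 1 := by
      have : 0 ≤ 1/(f n:ℝ) := by positivity
      linarith
    calc Q n * (1 - 1/(f n:ℝ)) ≤ Q n * 1 := by
          apply mul_le_mul_of_nonneg_left h1 (hQpos n).le
      _ = Q n := mul_one _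
  -- summability of 1/f i
  have hsum_bound : ∀ n, ∑ i ∈ Finset.range n, (1:ℝ)/(f i) ≤ Real.log 2 := by
    intro n
    have hle : Q n ≤ Real.exp (-(∑ i ∈ Finset.range n, (1:ℝ)/(f i))) := by
      rw [← Finset.sum_neg_distrib, Real.exp_sum]
      apply Finset.prod_le_prod
      · intro i _; exact hfac0 i
      · intro i _
        have := Real.add_one_le_exp (-(1/(f i:ℝ)))
        linarith
    have h12 : (1:ℝ)/2 < Real.exp (-(∑ i ∈ Finset.range n, (1:ℝ)/(f i))) :=
      lt_of_lt_of_le (hQhalf n) hle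
    have hlog := Real.log_lt_log (by norm_num) h12
    rw [Real.log_exp] at hlog
    have hl : Real.log (1/2) = -Real.log 2 := by
      rw [one_div, Real.log_inv]
    linarith
  have hfpos : ∀ i, (0:ℝ) ≤ 1/(f i) := fun i => by positivity
  have hsum : Summable (fun i => (1:ℝ)/(f i)) :=
    summable_of_sum_range_le hfpos hsum_bound
  -- convergence
  have hbdd : BddBelow (Set.range Q) := ⟨1/2, by rintro x ⟨n, rfl⟩; exact (hQhalf n).le⟩
  have hL : Filter.Tendsto Q Filter.atTop (nhds (⨅ n, Q n)) :=
    tendsto_atTop_ciInf hQanti hbdd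
  set Lv := ⨅ n, Q n with hLv
  have hLhalf : 1/2 ≤ Lv := le_ciInf (fun n => (hQhalf n).le)
  have hLQ : ∀ n, Lv ≤ Q n := fun n => ciInf_le hbdd n
  -- claim Lv = 1/2
  have hLeq : Lv = 1/2 := by
    by_contra hne
    have hLgt : 1/2 < Lv := lt_of_le_of_ne hLhalf (Ne.symm hne)
    set T := Lv/(Lv - 1/2) with hT
    obtain ⟨N, hN⟩ := exists_nat_gt T
    have hTN : T < (f N : ℝ) := by
      have : (N:ℝ) ≤ f N := by exact_mod_cast hmono.le_apply
      linarith
    -- every p ∈ S beyond f n (n ≥ N) that is < f (n+1) would contradict minimality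
    have step : ∀ n, N ≤ n → ∀ p ∈ S, f n < p → f (n+1) ≤ p := by
      intro n hn p hpS hp
      apply Nat.sInf_le
      refine ⟨hpS, ?_, ?_⟩
      · intro q hq
        obtain ⟨i, hi, rfl⟩ := chain_mem hinf (n+1) q hq
        exact lt_of_le_of_lt (hmono.monotone (Nat.lt_succ_iff.1 hi)) hp
      · rw [← prod_eq]
        apply thresh (hQhalf (n+1))
        have hQL : Lv ≤ Q (n+1) := hLQ (n+1)
        have hden1 : 0 < Q (n+1) - 1/2 := by linarith [hQhalf (n+1)]
        have hden2 : 0 < Lv - 1/2 := by linarith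
        have hTle : Q (n+1)/(Q (n+1) - 1/2) ≤ T := by
          rw [hT, div_le_div_iff₀ hden1 hden2]
          nlinarith
        have h1 : (f n : ℝ) < p := by exact_mod_cast hp
        have h2' : (f N : ℝ) ≤ f n := by exact_mod_cast hmono.monotone hn
        linarith
    -- hence all elements of S beyond f N are in the range of f
    have hrange : ∀ p ∈ S, f N < p → p ∈ Set.range f := by
      intro p hpS hp
      classical
      have hNp : N ≤ p := le_trans hmono.le_apply hp.le
      set n := Nat.findGreatest (fun k => f k < p) p with hn
      have hPn : f n < p := by
        rw [hn]
        exact Nat.findGreatest_spec (P := fun k => f k < p) (n := p) hNp hp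
      have hnN : N ≤ n := Nat.le_findGreatest hNp hp
      have hnp : n < p := lt_of_le_of_lt hmono.le_apply hPn
      have hgt : p ≤ f (n+1) := by
        by_contra hlt
        push_neg at hlt
        exact Nat.findGreatest_is_greatest (P := fun k => f k < p) (n := p)
          (hn ▸ Nat.lt_succ_self n) hnp hlt
      have := step n hnN p hpS hPn
      exact ⟨n+1, le_antisymm this hgt⟩
    -- contradiction with non-summability
    apply hdiv
    set h : ℕ → ℝ := fun n => (1:ℝ)/n with hh
    have hh0 : ∀ x, 0 ≤ h x := fun x => by positivity
    have hF : Summable ((S ∩ Set.Iic (f N)).indicator h) := by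
      apply summable_of_ne_finset_zero (s := Finset.Iic (f N))
      intro b hb
      apply Set.indicator_of_notMem
      intro hmem'
      exact hb (Finset.mem_Iic.2 hmem'.2)
    have hG : Summable ((Set.range f).indicator h) := by
      rw [← hmono.injective.summable_iff
        (fun x hx => Set.indicator_of_notMem hx h)]
      apply hsum.congr
      intro i
      simp [hh, Set.indicator_of_mem (Set.mem_range_self i)]
    apply Summable.of_nonneg_of_le (f := (S ∩ Set.Iic (f N)).indicator h
      + (Set.range f).indicator h)
      (fun x => Set.indicator_nonneg (fun x _ => hh0 x) x)
    · intro x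
      by_cases hxS : x ∈ S
      · rw [Set.indicator_of_mem hxS]
        by_cases hxle : x ≤ f N
        · have : ((S ∩ Set.Iic (f N)).indicator h) x = h x :=
            Set.indicator_of_mem (show x ∈ S ∩ Set.Iic (f N) from ⟨hxS, hxle⟩) h
          simp only [Pi.add_apply, this]
          have := Set.indicator_nonneg (fun y (_ : y ∈ Set.range f) => hh0 y) x
          linarith
        · push_neg at hxle
          have hxr : x ∈ Set.range f := hrange x hxS hxle
          have : ((Set.range f).indicator h) x = h x := Set.indicator_of_mem hxr h
          simp only [Pi.add_apply, this]
          have := Set.indicator_nonneg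
            (fun y (_ : y ∈ S ∩ Set.Iic (f N)) => hh0 y) x
          linarith
      · rw [Set.indicator_of_notMem hxS]
        have h1 := Set.indicator_nonneg (fun y (_ : y ∈ S ∩ Set.Iic (f N)) => hh0 y) x
        have h2 := Set.indicator_nonneg (fun y (_ : y ∈ Set.range f) => hh0 y) x
        simp only [Pi.add_apply]
        linarith
    · exact hF.add hG
  exact ⟨f, hmono, hmem, hsum, by rw [← hLeq]; exact hL⟩

end GreedyHalf

/-- There exist two disjoint infinite sequences of odd primes `{ℓ_i}` and `{ℓ'_i}` with
`∏_{i} (1 - 1/ℓ_i) = ∏_{i} (1 - 1/ℓ'_i) = 1/2` (as limits of the partial products). -/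
theorem exists_disjoint_odd_prime_seqs_prod_half :
    ∃ f g : ℕ → ℕ,
      StrictMono f ∧ StrictMono g ∧
      (∀ i, (f i).Prime ∧ Odd (f i)) ∧ (∀ i, (g i).Prime ∧ Odd (g i)) ∧
      (∀ i j, f i ≠ g j) ∧
      Filter.Tendsto (fun n => ∏ i ∈ Finset.range n, (1 - 1 / (f i : ℝ)))
        Filter.atTop (nhds (1 / 2)) ∧
      Filter.Tendsto (fun n => ∏ i ∈ Finset.range n, (1 - 1 / (g i : ℝ)))
        Filter.atTop (nhds (1 / 2)) := by
  classical
  set h : ℕ → ℝ := fun n => (1:ℝ)/n with hh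
  have hh0 : ∀ x, 0 ≤ h x := fun x => by positivity
  set S₀ : Set ℕ := {p | p.Prime ∧ Odd p} with hS₀
  have h2₀ : ∀ p ∈ S₀, 2 ≤ p := fun p hp => hp.1.two_le
  have hdiv₀ : ¬ Summable (S₀.indicator h) := by
    intro hsummable
    apply not_summable_one_div_on_primes
    have h2fin : Summable (({2} : Set ℕ).indicator h) := by
      apply summable_of_ne_finset_zero (s := {2})
      intro b hb
      apply Set.indicator_of_notMem
      simpa using hb
    apply Summable.of_nonneg_of_le
      (fun x => Set.indicator_nonneg (fun x _ => hh0 x) x)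
      (f := S₀.indicator h + ({2} : Set ℕ).indicator h) _ (hsummable.add h2fin)
    intro x
    by_cases hx : x.Prime
    · rw [Set.indicator_of_mem (show x ∈ {p | Nat.Prime p} from hx)]
      rcases hx.eq_two_or_odd' with h2 | hodd
      · subst h2
        have : (({2} : Set ℕ).indicator h) 2 = h 2 := Set.indicator_of_mem rfl h
        simp only [Pi.add_apply, this]
        have := Set.indicator_nonneg (fun y (_ : y ∈ S₀) => hh0 y) 2
        show h 2 ≤ _
        linarith
      · have : (S₀.indicator h) x = h x := Set.indicator_of_mem (show x ∈ S₀ from ⟨hx, hodd⟩) h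
        simp only [Pi.add_apply, this]
        have := Set.indicator_nonneg (fun y (_ : y ∈ ({2}:Set ℕ)) => hh0 y) x
        show h x ≤ _
        linarith
    · rw [Set.indicator_of_notMem (show x ∉ {p | Nat.Prime p} from hx)]
      have h1 := Set.indicator_nonneg (fun y (_ : y ∈ S₀) => hh0 y) x
      have h2 := Set.indicator_nonneg (fun y (_ : y ∈ ({2}:Set ℕ)) => hh0 y) x
      simp only [Pi.add_apply]
      linarith
  obtain ⟨f, hfmono, hfmem, hfsum, hflim⟩ := GreedyHalf.key S₀ h2₀ hdiv₀
  set S₁ : Set ℕ := S₀ \ Set.range f with hS₁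
  have h2₁ : ∀ p ∈ S₁, 2 ≤ p := fun p hp => hp.1.1.two_le
  have hdiv₁ : ¬ Summable (S₁.indicator h) := by
    intro hsummable
    apply hdiv₀
    have hG : Summable ((Set.range f).indicator h) := by
      rw [← hfmono.injective.summable_iff
        (fun x hx => Set.indicator_of_notMem hx h)]
      apply hfsum.congr
      intro i
      simp [hh, Set.indicator_of_mem (Set.mem_range_self i)]
    apply Summable.of_nonneg_of_le
      (fun x => Set.indicator_nonneg (fun x _ => hh0 x) x)
      (f := S₁.indicator h + (Set.range f).indicator h) _ (hsummable.add hG)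
    intro x
    by_cases hx : x ∈ S₀
    · rw [Set.indicator_of_mem hx]
      by_cases hxr : x ∈ Set.range f
      · have : ((Set.range f).indicator h) x = h x := Set.indicator_of_mem hxr h
        simp only [Pi.add_apply, this]
        have := Set.indicator_nonneg (fun y (_ : y ∈ S₁) => hh0 y) x
        linarith
      · have : (S₁.indicator h) x = h x := Set.indicator_of_mem (show x ∈ S₁ from ⟨hx, hxr⟩) h
        simp only [Pi.add_apply, this]
        have := Set.indicator_nonneg (fun y (_ : y ∈ Set.range f) => hh0 y) x
        linarith
    · rw [Set.indicator_of_notMem hx]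
      have h1 := Set.indicator_nonneg (fun y (_ : y ∈ S₁) => hh0 y) x
      have h2 := Set.indicator_nonneg (fun y (_ : y ∈ Set.range f) => hh0 y) x
      simp only [Pi.add_apply]
      linarith
  obtain ⟨g, hgmono, hgmem, hgsum, hglim⟩ := GreedyHalf.key S₁ h2₁ hdiv₁
  refine ⟨f, g, hfmono, hgmono, fun i => (hfmem i : f i ∈ S₀), fun i => (hgmem i).1, ?_, hflim, hglim⟩
  intro i j hij
  exact (hgmem j).2 ⟨i, hij⟩
end

section
/- Let D > 1 be a squarefree integer. Then there exists ζ = x + y√D with x, y positive integers, x² − Dy² = 1, so that ζ is an algebraic integer in ℚ(√D) of norm 1 satisfying ζ > 1 > |ζ̄| under the real embedding with √D > 0. -/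
/-- Let `D > 1` be squarefree. Then there exist positive integers `x, y` with `x² - Dy² = 1`,
so that `ζ = x + y√D` is an algebraic integer of `ℚ(√D)` of norm `1` satisfying
`ζ > 1 > |ζ̄|` in the real embedding with `√D > 0`. -/
theorem exists_pell_unit (D : ℕ) (hD1 : 1 < D) (hD : Squarefree D) :
    ∃ x y : ℕ, 0 < x ∧ 0 < y ∧ (x : ℤ) ^ 2 - D * y ^ 2 = 1 ∧
      1 < (x : ℝ) + y * Real.sqrt D ∧ |(x : ℝ) - y * Real.sqrt D| < 1 := by
  have hd0 : (0 : ℤ) < (D : ℤ) := by exact_mod_cast Nat.zero_lt_of_lt hD1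
  have hns : ¬ IsSquare ((D : ℤ)) := by
    rw [Int.isSquare_natCast_iff]
    intro ⟨k, hk⟩
    have hk' : k * k ∣ D := ⟨1, by omega⟩
    have := Nat.isUnit_iff.mp (hD k hk')
    subst this
    omega
  obtain ⟨x, y, hxy, hy⟩ := Pell.exists_of_not_isSquare hd0 hns
  refine ⟨x.natAbs, y.natAbs, ?_, ?_, ?_, ?_, ?_⟩
  · -- 0 < x.natAbs
    rcases Nat.eq_zero_or_pos x.natAbs with h | h
    · exfalso
      have hx0 : x = 0 := Int.natAbs_eq_zero.mp h
      rw [hx0] at hxy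
      nlinarith [sq_nonneg y]
    · exact h
  · exact Int.natAbs_pos.mpr hy
  all_goals {
    have hxa : ((x.natAbs : ℤ)) ^ 2 = x ^ 2 := by
      rw [Int.natCast_natAbs, sq_abs]
    have hya : ((y.natAbs : ℤ)) ^ 2 = y ^ 2 := by
      rw [Int.natCast_natAbs, sq_abs]
    have key : ((x.natAbs : ℤ)) ^ 2 - D * (y.natAbs : ℤ) ^ 2 = 1 := by
      rw [hxa, hya]; exact hxy
    first
    | exact_mod_cast key
    | {
      set a : ℝ := (x.natAbs : ℝ)
      set b : ℝ := (y.natAbs : ℝ)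
      set s : ℝ := Real.sqrt D
      have hs2 : s ^ 2 = D := Real.sq_sqrt (by positivity)
      have hs1 : (1 : ℝ) < s := by
        nlinarith [Real.sqrt_nonneg (D : ℝ), show (2:ℝ) ≤ (D:ℝ) by exact_mod_cast hD1]
      have ha1 : 1 ≤ a := by
        show (1:ℝ) ≤ (x.natAbs : ℝ)
        have : 1 ≤ x.natAbs := by
          rcases Nat.eq_zero_or_pos x.natAbs with h | h
          · exfalso
            have hx0 : x = 0 := Int.natAbs_eq_zero.mp h
            rw [hx0] at hxy
            nlinarith [sq_nonneg y]
          · exact h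
        exact_mod_cast this
      have hb1 : 1 ≤ b := by
        show (1:ℝ) ≤ (y.natAbs : ℝ)
        have : 1 ≤ y.natAbs := Int.natAbs_pos.mpr hy
        exact_mod_cast this
      have keyR : a ^ 2 - (D : ℝ) * b ^ 2 = 1 := by
        show ((x.natAbs:ℝ)) ^ 2 - (D : ℝ) * ((y.natAbs:ℝ)) ^ 2 = 1
        exact_mod_cast key
      have prod : (a + b * s) * (a - b * s) = 1 := by
        have : (a + b * s) * (a - b * s) = a ^ 2 - b ^ 2 * s ^ 2 := by ring
        rw [this, hs2]; linarith [keyR]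
      have hgt : 1 < a + b * s := by nlinarith
      first
      | exact hgt
      | {
        rw [abs_lt]
        constructor <;> nlinarith
      }
    }
  }
end

section
/- Let K = ℚ(√D) be real quadratic (real embedding fixed with √D > 0), ζ ∈ O_K with N(ζ) = ±1 and |ζ| > 1 > |ζ̄|, and β ∈ O_K with β ∉ ℚ and |β| > |β̄|. Set α = β², P_n = ttr(β²ζ^{2n}) = ttr(βζ^n)·tr(βζ^n) and Q_n = ttr(ζ^{2n}) = ttr(ζ^n)·tr(ζ^n). Then there is a constant C = C(α, D) such that |Q_n α − P_n| ≤ C/|Q_n| for all sufficiently large n. -/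
/-- Let `ζ = u + v√D ∈ O_K` with `N(ζ) = ±1` and `|ζ| > 1 > |ζ̄|`, and `β = a + b√D ∈ O_K`
with `β ∉ ℚ` and `|β| > |β̄|`. Set `α = β²`, `P_n = ttr(β²ζ^{2n})` and `Q_n = ttr(ζ^{2n})`.
Then there is a constant `C = C(α, D)` with `|Q_n α - P_n| ≤ C/|Q_n|` for all large `n`. -/
theorem twisted_trace_approximation
    (D : ℕ) (hD : Squarefree D) (hD1 : 1 < D)
    (u v : ℚ) (ζ ζb : ℝ) (hζ : ζ = u + v * Real.sqrt D) (hζb : ζb = u - v * Real.sqrt D)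
    (hζint : ∃ t n : ℤ, (t : ℝ) = ζ + ζb ∧ (n : ℝ) = ζ * ζb)
    (hζnorm : ζ * ζb = 1 ∨ ζ * ζb = -1)
    (hζbig : 1 < |ζ|) (hζbsmall : |ζb| < 1)
    (a b : ℚ) (hb : b ≠ 0)
    (β βb : ℝ) (hβ : β = a + b * Real.sqrt D) (hβb : βb = a - b * Real.sqrt D)
    (hβint : ∃ t n : ℤ, (t : ℝ) = β + βb ∧ (n : ℝ) = β * βb)
    (hβbig : |βb| < |β|)
    (α : ℝ) (hα : α = β ^ 2)
    (P Q : ℕ → ℝ)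
    (hP : ∀ n, P n = (β ^ 2 * ζ ^ (2 * n) - βb ^ 2 * ζb ^ (2 * n)) * Real.sqrt D)
    (hQ : ∀ n, Q n = (ζ ^ (2 * n) - ζb ^ (2 * n)) * Real.sqrt D) :
    ∃ C : ℝ, 0 < C ∧ ∃ N₀ : ℕ, ∀ n ≥ N₀, |Q n * α - P n| ≤ C / |Q n| := by
  set s := Real.sqrt D with hs
  have hDpos : (0 : ℝ) < D := by exact_mod_cast Nat.lt_of_lt_of_le Nat.zero_lt_one hD1.le
  have hspos : 0 < s := Real.sqrt_pos.mpr hDpos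
  have habs : |ζ * ζb| = 1 := by rcases hζnorm with h | h <;> rw [h] <;> simp
  refine ⟨2 * s ^ 2 * |β ^ 2 - βb ^ 2| + 1, by positivity, 1, fun n hn => ?_⟩
  have hζbpow : |ζb| ^ (2 * n) ≤ 1 := pow_le_one₀ (abs_nonneg _) hζbsmall.le
  have hζpow : (1 : ℝ) < |ζ| ^ (2 * n) := one_lt_pow₀ hζbig (by omega)
  have hne : Q n ≠ 0 := by
    rw [hQ n]
    refine mul_ne_zero ?_ hspos.ne'
    intro h
    rw [sub_eq_zero] at h
    have h1 : |ζb ^ (2 * n)| < |ζ ^ (2 * n)| := by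
      rw [abs_pow, abs_pow]
      exact lt_of_le_of_lt hζbpow hζpow
    rw [h] at h1
    exact lt_irrefl _ h1
  have hQpos : 0 < |Q n| := abs_pos.mpr hne
  rw [le_div_iff₀ hQpos]
  have heq : Q n * α - P n = (βb ^ 2 - β ^ 2) * ζb ^ (2 * n) * s := by
    rw [hP n, hQ n, hα]; ring
  have hQle : |Q n| ≤ 2 * |ζ| ^ (2 * n) * s := by
    rw [hQ n, abs_mul, abs_of_pos hspos]
    have : |ζ ^ (2 * n) - ζb ^ (2 * n)| ≤ |ζ ^ (2 * n)| + |ζb ^ (2 * n)| := abs_sub _ _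
    rw [abs_pow, abs_pow] at this
    nlinarith [abs_nonneg (ζ ^ (2 * n) - ζb ^ (2 * n))]
  calc |Q n * α - P n| * |Q n|
      = (|βb ^ 2 - β ^ 2| * |ζb| ^ (2 * n) * s) * |Q n| := by
        rw [heq, abs_mul, abs_mul, abs_pow, abs_of_pos hspos]
    _ ≤ (|βb ^ 2 - β ^ 2| * |ζb| ^ (2 * n) * s) * (2 * |ζ| ^ (2 * n) * s) := by
        have h0 : 0 ≤ |βb ^ 2 - β ^ 2| * |ζb| ^ (2 * n) * s := by positivity
        exact mul_le_mul_of_nonneg_left hQle h0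
    _ = 2 * s ^ 2 * |βb ^ 2 - β ^ 2| * (|ζb| * |ζ|) ^ (2 * n) := by
        rw [mul_pow]; ring
    _ = 2 * s ^ 2 * |βb ^ 2 - β ^ 2| * 1 := by
        rw [← abs_mul, mul_comm ζb ζ, habs, one_pow]
    _ ≤ 2 * s ^ 2 * |β ^ 2 - βb ^ 2| + 1 := by
        rw [abs_sub_comm]; linarith
end

section
/- Let ζ ∈ O_K with ζ > 1 > |ζ̄| and N(ζ) = 1 in a real quadratic field K = ℚ(√D). Then for all sufficiently large n, both integer factors ttr(ζ^n) and tr(ζ^n) of Q_n = ttr(ζ^{2n}) satisfy min(|ttr(ζ^n)|, |tr(ζ^n)|) ≥ c·|Q_n|^{1/2} for a constant c = c(D) > 0; i.e., the sequence Q_n is strongly evenly divisible. -/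
/-- Let `ζ` be a Pell unit of `K = ℚ(√D)` (`N(ζ) = 1`, `ζ > 1 > |ζ̄|`). Then for all large `n`
the two integer factors `ttr(ζ^n)` and `tr(ζ^n)` of `Q_n = ttr(ζ^{2n})` satisfy
`min(|ttr(ζ^n)|, |tr(ζ^n)|) ≥ c·|Q_n|^{1/2}` for a constant `c = c(D) > 0`; i.e. the sequence
`Q_n` is strongly evenly divisible. -/
theorem twisted_trace_strongly_evenly_divisible
    (D : ℕ) (hD : Squarefree D) (hD1 : 1 < D)
    (u v : ℚ) (ζ ζb : ℝ) (hζ : ζ = u + v * Real.sqrt D) (hζb : ζb = u - v * Real.sqrt D)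
    (hζint : ∃ t n : ℤ, (t : ℝ) = ζ + ζb ∧ (n : ℝ) = ζ * ζb)
    (hζnorm : ζ * ζb = 1)
    (hζbig : 1 < ζ) (hζbsmall : |ζb| < 1)
    (Q : ℕ → ℝ) (hQ : ∀ n, Q n = (ζ ^ (2 * n) - ζb ^ (2 * n)) * Real.sqrt D) :
    ∃ c : ℝ, 0 < c ∧ ∃ N₀ : ℕ, ∀ n ≥ N₀,
      c * |Q n| ^ ((1 : ℝ) / 2) ≤
        min |(ζ ^ n - ζb ^ n) * Real.sqrt D| |ζ ^ n + ζb ^ n| := by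
  have hζpos : (0:ℝ) < ζ := lt_trans one_pos hζbig
  have hζbpos : 0 < ζb := by
    rcases lt_trichotomy ζb 0 with h | h | h
    · nlinarith
    · nlinarith
    · exact h
  have hζb1 : ζb < 1 := lt_of_abs_lt hζbsmall
  have hD2 : (2:ℝ) ≤ (D:ℝ) := by exact_mod_cast hD1
  have hsD : 1 ≤ Real.sqrt D := by
    rw [show (1:ℝ) = Real.sqrt 1 by simp]
    exact Real.sqrt_le_sqrt (by linarith)
  have hssD : 0 < Real.sqrt (Real.sqrt D) := Real.sqrt_pos.2 (by linarith)
  obtain ⟨N₀, hN₀⟩ := pow_unbounded_of_one_lt (2:ℝ) hζbig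
  refine ⟨1 / (2 * Real.sqrt (Real.sqrt D)), by positivity, N₀, fun n hn => ?_⟩
  have hζn2 : (2:ℝ) ≤ ζ ^ n := le_trans hN₀.le (pow_le_pow_right₀ hζbig.le hn)
  have hζbn1 : ζb ^ n ≤ 1 := pow_le_one₀ hζbpos.le hζb1.le
  have hζbnpos : 0 < ζb ^ n := pow_pos hζbpos n
  have hpm : ζ ^ (2 * n) = (ζ ^ n) ^ 2 := pow_mul' ζ 2 n
  have hpmb : ζb ^ (2 * n) = (ζb ^ n) ^ 2 := pow_mul' ζb 2 n
  have hQn : |Q n| ≤ (ζ ^ n * Real.sqrt (Real.sqrt D)) ^ 2 := by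
    have hsq : Real.sqrt (Real.sqrt D) ^ 2 = Real.sqrt D :=
      Real.sq_sqrt (by linarith)
    have hQpos : 0 ≤ Q n := by
      rw [hQ n, hpm, hpmb]
      have : (ζb ^ n) ^ 2 ≤ (ζ ^ n) ^ 2 := by nlinarith
      nlinarith
    rw [abs_of_nonneg hQpos, hQ n, hpm, hpmb, mul_pow, hsq]
    nlinarith
  have hroot : |Q n| ^ ((1:ℝ)/2) ≤ ζ ^ n * Real.sqrt (Real.sqrt D) := by
    rw [← Real.sqrt_eq_rpow]
    calc Real.sqrt |Q n| ≤ Real.sqrt ((ζ ^ n * Real.sqrt (Real.sqrt D)) ^ 2) :=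
          Real.sqrt_le_sqrt hQn
      _ = ζ ^ n * Real.sqrt (Real.sqrt D) := Real.sqrt_sq (by positivity)
  have hkey : 1 / (2 * Real.sqrt (Real.sqrt D)) * |Q n| ^ ((1:ℝ)/2) ≤ ζ ^ n / 2 := by
    have h1 : 1 / (2 * Real.sqrt (Real.sqrt D)) * (ζ ^ n * Real.sqrt (Real.sqrt D))
        = ζ ^ n / 2 := by
      field_simp
    rw [← h1]
    have hc : 0 < 1 / (2 * Real.sqrt (Real.sqrt D)) := by positivity
    exact mul_le_mul_of_nonneg_left hroot hc.le
  refine le_trans hkey (le_min ?_ ?_)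
  · have habs : |(ζ ^ n - ζb ^ n) * Real.sqrt D| = (ζ ^ n - ζb ^ n) * Real.sqrt D := by
      apply abs_of_nonneg
      have : ζb ^ n ≤ ζ ^ n := by linarith
      nlinarith
    rw [habs]
    nlinarith
  · rw [abs_of_nonneg (by positivity)]
    linarith
end
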